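/- Let V be a finite-dimensional simple 𝔰𝔩_n(ℂ)-module with highest weight λ = Σ_{d=1}^{n−1} a_d δ_d (a_d ∈ ℤ_{≥0}), and suppose λ ≠ δ_d for every d = 0, 1, ..., n−1 (where δ_0 = 0). Then there exist indices 1 ≤ t' ≠ t ≤ n such that E_{t',t}^2 v ≠ 0 for some highest weight vector v of V. -/

import Mathlib

open Matrix

/-- Let `V` be a finite-dimensional simple `𝔰𝔩ₙ(ℂ)`-module (given by a linear map `ρ`
preserving brackets of traceless matrices) with highest weight vector `v` of highest weight
`λ = ∑_d a_d δ_d` (so `(E_{d,d} − E_{d+1,d+1}) v = a_d v` in 0-indexed notation, and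
`E_{ij} v = 0` for `i < j`).  If `λ ≠ δ_d` for all `d = 0, 1, ..., n−1` — equivalently
`∑_d a_d ≥ 2` — then there are indices `t' ≠ t` with `E_{t',t}² v ≠ 0`. -/
theorem sq_of_matrix_unit_nonzero_on_hwv (n : ℕ) (hn : 2 ≤ n)
    (V : Type*) [AddCommGroup V] [Module ℂ V] [FiniteDimensional ℂ V]
    (ρ : Matrix (Fin n) (Fin n) ℂ →ₗ[ℂ] Module.End ℂ V)
    (hρ : ∀ A B : Matrix (Fin n) (Fin n) ℂ, A.trace = 0 → B.trace = 0 →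
      ρ ⁅A, B⁆ = ⁅ρ A, ρ B⁆)
    (hsimple : ∀ W : Submodule ℂ V,
      (∀ A : Matrix (Fin n) (Fin n) ℂ, A.trace = 0 → W.map (ρ A) ≤ W) → W = ⊥ ∨ W = ⊤)
    (v : V) (hv : v ≠ 0)
    (hhw : ∀ i j : Fin n, i < j → ρ (Matrix.single i j (1 : ℂ)) v = 0)
    (a : ℕ → ℕ)
    (hwt : ∀ (d : ℕ) (hd : d + 1 < n),
      ρ (Matrix.single ⟨d, by omega⟩ ⟨d, by omega⟩ (1 : ℂ) -
          Matrix.single ⟨d + 1, hd⟩ ⟨d + 1, hd⟩ (1 : ℂ)) v = (a d : ℂ) • v)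
    (hsum : 2 ≤ ∑ d ∈ Finset.range (n - 1), a d) :
    ∃ t' t : Fin n, t' ≠ t ∧
      ρ (Matrix.single t' t (1 : ℂ)) (ρ (Matrix.single t' t (1 : ℂ)) v) ≠ 0 := by
  have hn1 : n - 1 < n := by omega
  have h0 : 0 < n := by omega
  set i : Fin n := ⟨0, h0⟩ with hi
  set j : Fin n := ⟨n - 1, hn1⟩ with hj
  have hijne : i ≠ j := by
    simp only [hi, hj, Fin.mk.injEq, ne_eq]
    omega
  refine ⟨j, i, hijne.symm, ?_⟩
  set E : Matrix (Fin n) (Fin n) ℂ := Matrix.single i j 1 with hE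
  set F : Matrix (Fin n) (Fin n) ℂ := Matrix.single j i 1 with hF
  set H : Matrix (Fin n) (Fin n) ℂ :=
    Matrix.single i i 1 - Matrix.single j j 1 with hH
  have htE : E.trace = 0 := Matrix.trace_single_eq_of_ne i j 1 hijne
  have htF : F.trace = 0 := Matrix.trace_single_eq_of_ne j i 1 hijne.symm
  have htH : H.trace = 0 := by
    simp [hH, Matrix.trace_sub, Matrix.trace_single_eq_same]
  have hEF : ⁅E, F⁆ = H := by
    simp [hE, hF, hH, Ring.lie_def, Matrix.single_mul_single_same]
  have hHF : ⁅H, F⁆ = (-2 : ℂ) • F := by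
    simp only [hH, hF, Ring.lie_def, Matrix.sub_mul, Matrix.mul_sub,
      Matrix.single_mul_single_same, Matrix.single_mul_single_of_ne _ _ _ _ hijne,
      mul_one]
    module
  set m : ℕ := ∑ d ∈ Finset.range (n - 1), a d with hm
  -- ρ H v = m • v via telescoping
  have hHv : ρ H v = (m : ℂ) • v := by
    set f : ℕ → Matrix (Fin n) (Fin n) ℂ := fun d =>
      if h : d < n then Matrix.single ⟨d, h⟩ ⟨d, h⟩ (1 : ℂ) else 0 with hf
    have hHeq : H = ∑ d ∈ Finset.range (n - 1), (f d - f (d + 1)) := by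
      rw [Finset.sum_range_sub' f (n - 1)]
      simp only [hf, dif_pos h0, dif_pos hn1, hH, hi, hj]
    have : ρ H v = ∑ d ∈ Finset.range (n - 1), ρ (f d - f (d + 1)) v := by
      rw [hHeq, map_sum]
      simp [LinearMap.sum_apply]
    rw [this]
    have key : ∀ d ∈ Finset.range (n - 1), ρ (f d - f (d + 1)) v = (a d : ℂ) • v := by
      intro d hd
      rw [Finset.mem_range] at hd
      have hd1 : d + 1 < n := by omega
      have hdn : d < n := by omega
      have := hwt d hd1
      simp only [hf, dif_pos hdn, dif_pos hd1]
      exact this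
    rw [Finset.sum_congr rfl key, ← Finset.sum_smul]
    norm_cast
  have hEv : ρ E v = 0 := by
    apply hhw i j
    simp only [hi, hj, Fin.mk_lt_mk]
    omega
  have hm0 : (m : ℂ) ≠ 0 := by
    intro h
    norm_cast at h
    omega
  -- bracket relations as endomorphisms
  have hef : ∀ x : V, ρ E (ρ F x) = ρ H x + ρ F (ρ E x) := by
    intro x
    have := hρ E F htE htF
    rw [hEF] at this
    have := congrArg (fun g : Module.End ℂ V => g x) this
    simpa [Ring.lie_def, sub_eq_iff_eq_add] using this.symm
  have hhf : ∀ x : V, ρ H (ρ F x) = ρ F (ρ H x) + (-2 : ℂ) • ρ F x := by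
    intro x
    have := hρ H F htH htF
    rw [hHF, _root_.map_smul] at this
    have := congrArg (fun g : Module.End ℂ V => g x) this
    simp only [Ring.lie_def, LinearMap.sub_apply, Module.End.mul_apply,
      LinearMap.smul_apply] at this
    exact sub_eq_iff_eq_add'.mp this.symm
  have h1 : ρ E (ρ F v) = (m : ℂ) • v := by
    rw [hef v, hEv, map_zero, hHv, add_zero]
  have hfv : ρ F v ≠ 0 := by
    intro h
    apply hv
    have : (m : ℂ) • v = 0 := by rw [← h1, h, map_zero]
    exact (smul_eq_zero.mp this).resolve_left hm0
  have h2 : ρ H (ρ F v) = ((m : ℂ) - 2) • ρ F v := by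
    rw [hhf v, hHv, LinearMap.map_smul]
    module
  intro hcon
  have h3 : ρ E (ρ F (ρ F v)) = ((2 : ℂ) * m - 2) • ρ F v := by
    rw [hef (ρ F v), h1, LinearMap.map_smul, h2]
    module
  rw [hcon, map_zero] at h3
  have hcoef : ((2 : ℂ) * m - 2) ≠ 0 := by
    intro h
    have : (m : ℂ) = 1 := by linear_combination h / 2
    norm_cast at this
    omega
  exact hfv ((smul_eq_zero.mp h3.symm).resolve_left hcoef)
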